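/- Let E be a complex Hilbert space and x, y ∈ E with ‖x‖ < 1, ‖y‖ < 1 and x ≠ y. Write r = ‖x‖, s = ‖y‖, p = ⟨x,y⟩, A = ‖x - y‖² and B = r²s² - |p|². Then A ≥ B, and moreover A * |1 - p|² ≤ 4 * (A - B). -/

import Mathlib

set_option maxHeartbeats 1000000 in
lemma aux (r s u v : ℝ) (hr0 : 0 ≤ r) (hs0 : 0 ≤ s) (hr : r < 1) (hs : s < 1)
    (hcs : u^2+v^2 ≤ r^2*s^2) :
    r^2*s^2 - (u^2+v^2) ≤ r^2+s^2-2*u ∧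
    (r^2+s^2-2*u) * ((1-u)^2+v^2) ≤ 4*(((1-u)^2+v^2) - (1-r^2)*(1-s^2)) := by
  have ht0 : 0 ≤ r*s := mul_nonneg hr0 hs0
  have hu2 : u^2 ≤ (r*s)^2 := by nlinarith [sq_nonneg v]
  have hule : u ≤ r*s := by nlinarith [sq_nonneg (r*s - u)]
  have huge : -(r*s) ≤ u := by nlinarith [sq_nonneg (r*s + u)]
  have hts : r*s < 1 := by nlinarith
  constructor
  · nlinarith [sq_nonneg (r-s), sq_nonneg v, mul_nonneg (sub_nonneg.2 hule) (by nlinarith : (0:ℝ) ≤ 2 - u - r*s)]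
  · have hApos : 0 ≤ r^2+s^2-2*u := by nlinarith [sq_nonneg (r-s)]
    have hkpos : 0 ≤ 4-r^2-s^2+2*u := by nlinarith
    have h1 : 0 ≤ 2*(r*s)*(v^2*(4-r^2-s^2+2*u)) := by positivity
    have h2 : 0 ≤ 2*(r*s)*(((r*s)^2-u^2)*(r^2+s^2-2*u)) := by
      have h6 : 0 ≤ ((r*s)^2-u^2)*(r^2+s^2-2*u) := mul_nonneg (by linarith) hApos
      have h7 : 0 ≤ 2*(r*s) := by linarith
      exact mul_nonneg h7 h6
    have h3 : 0 ≤ (r*s-u)*((r+s)^2*((1-r*s)*(3+r*s))) := by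
      have h7 : 0 ≤ (1-r*s)*(3+r*s) := mul_nonneg (by linarith) (by linarith)
      have h8 : 0 ≤ r*s-u := by linarith
      exact mul_nonneg h8 (mul_nonneg (sq_nonneg _) h7)
    have h4 : 0 ≤ (r*s+u)*((r-s)^2*(4-(1-r*s)^2)) := by
      have h5 : 0 ≤ r*s+u := by linarith
      have h9 : 0 ≤ 4-(1-r*s)^2 := by nlinarith
      exact mul_nonneg h5 (mul_nonneg (sq_nonneg _) h9)
    have key : 0 ≤ 2*(r*s)*(4*(((1-u)^2+v^2) - (1-r^2)*(1-s^2)) - (r^2+s^2-2*u) * ((1-u)^2+v^2)) := by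
      have e : 2*(r*s)*(4*(((1-u)^2+v^2) - (1-r^2)*(1-s^2)) - (r^2+s^2-2*u) * ((1-u)^2+v^2))
        = 2*(r*s)*(v^2*(4-r^2-s^2+2*u)) + 2*(r*s)*(((r*s)^2-u^2)*(r^2+s^2-2*u))
          + (r*s-u)*((r+s)^2*((1-r*s)*(3+r*s))) + (r*s+u)*((r-s)^2*(4-(1-r*s)^2)) := by
        ring
      rw [e]; linarith
    rcases eq_or_lt_of_le ht0 with h0 | h0
    · have hts0 : r^2*s^2 = 0 := by nlinarith [h0.symm]
      have hu0 : u = 0 := by nlinarith [sq_nonneg u, sq_nonneg v]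
      have hv0 : v = 0 := by nlinarith [sq_nonneg u, sq_nonneg v]
      subst hu0 hv0
      nlinarith [sq_nonneg r, sq_nonneg s]
    · have h10 := (mul_nonneg_iff_of_pos_left (by linarith : (0:ℝ) < 2*(r*s))).mp key
      linarith

theorem stmt5 {E : Type*} [NormedAddCommGroup E] [InnerProductSpace ℂ E]
    (x y : E) (hx : ‖x‖ < 1) (hy : ‖y‖ < 1) (hxy : x ≠ y) :
    (‖x‖^2 * ‖y‖^2 - ‖(inner ℂ y x : ℂ)‖^2 ≤ ‖x - y‖^2) ∧
    ‖x - y‖^2 * ‖1 - (inner ℂ y x : ℂ)‖^2 ≤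
      4 * (‖x - y‖^2 - (‖x‖^2 * ‖y‖^2 - ‖(inner ℂ y x : ℂ)‖^2)) := by
  set p : ℂ := inner ℂ y x with hp
  have hcsn : ‖p‖ ≤ ‖y‖ * ‖x‖ := norm_inner_le_norm (𝕜 := ℂ) y x
  have habsp : ‖p‖ ^ 2 = p.re^2 + p.im^2 := by
    rw [Complex.sq_norm, Complex.normSq_apply]; ring
  have habs1p : ‖1 - p‖ ^ 2 = (1 - p.re)^2 + p.im^2 := by
    rw [Complex.sq_norm, Complex.normSq_apply]
    simp [Complex.sub_re, Complex.sub_im]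
    ring
  have hA : ‖x - y‖^2 = ‖x‖^2 - 2*p.re + ‖y‖^2 := by
    rw [@norm_sub_sq ℂ]
    congr 2
    rw [inner_re_symm]
    rfl
  have hcs : p.re^2 + p.im^2 ≤ ‖x‖^2 * ‖y‖^2 := by
    have : ‖p‖ ^ 2 ≤ (‖y‖*‖x‖)^2 := by
      have h0 : (0:ℝ) ≤ ‖p‖ := norm_nonneg p
      have : ‖p‖ ≤ ‖y‖ * ‖x‖ := hcsn
      nlinarith
    rw [habsp] at this
    nlinarith [this]
  obtain ⟨G1, G2⟩ := aux ‖x‖ ‖y‖ p.re p.im (norm_nonneg x) (norm_nonneg y) hx hy hcs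
  constructor
  · rw [habsp, hA]; linarith
  · rw [habsp, habs1p, hA]; nlinarith [G2]
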